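/- For all a > 0 and all λ > 0, the integral over (0,∞) of e^{−λx} · (1/(8√π)) x^{−7/2} e^{−a²/(4x)} (a³ + 6ax) dx equals λ e^{−a√λ} + (6/a) √λ e^{−a√λ} + (6/a²) e^{−a√λ}. In particular, ∫₀^∞ e^{−λx} |g_a(x)| dx ≤ λ e^{−a√λ} + (6/a) √λ e^{−a√λ} + (6/a²) e^{−a√λ}, where g_a(x) = (1/(8√π)) x^{−7/2} e^{−a²/(4x)} (a³ − 6ax). -/

import Mathlib

open MeasureTheory Filter Set Real Topology

noncomputable def Mer (y : ℝ) : ℝ := ∫ t in (0:ℝ)..y, Real.exp (-t^2)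

lemma Mer_cont : Continuous fun t : ℝ => Real.exp (-t^2) := by continuity

lemma Mer_hasDerivAt (y : ℝ) : HasDerivAt Mer (Real.exp (-y^2)) y :=
  intervalIntegral.integral_hasDerivAt_right (Mer_cont.intervalIntegrable 0 y)
    (Mer_cont.stronglyMeasurableAtFilter _ _) Mer_cont.continuousAt

lemma Mer_tendsto_atTop : Tendsto Mer atTop (𝓝 (Real.sqrt Real.pi / 2)) := by
  have hi : IntegrableOn (fun t : ℝ => Real.exp (-t^2)) (Ioi 0) := by
    have := (integrable_exp_neg_mul_sq one_pos).integrableOn (s := Ioi 0)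
    simpa using this
  have h := intervalIntegral_tendsto_integral_Ioi 0 hi tendsto_id
  have hv : (∫ t in Ioi (0:ℝ), Real.exp (-t^2)) = Real.sqrt Real.pi / 2 := by
    have := integral_gaussian_Ioi 1
    simpa using this
  rw [hv] at h
  exact h

lemma Mer_neg (y : ℝ) : Mer (-y) = -Mer y := by
  have h := intervalIntegral.integral_comp_neg (a := 0) (b := y)
    (fun t : ℝ => Real.exp (-t^2))
  simp only [neg_neg, neg_zero] at h
  have h' : (∫ t in (0:ℝ)..y, Real.exp (-t^2)) = ∫ t in (-y)..(0:ℝ), Real.exp (-t^2) := by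
    simpa using h
  unfold Mer
  rw [intervalIntegral.integral_symm, ← h']

lemma Mer_tendsto_atBot : Tendsto Mer atBot (𝓝 (-(Real.sqrt Real.pi / 2))) := by
  have h : Tendsto (fun y => -Mer (-y)) atBot (𝓝 (-(Real.sqrt Real.pi / 2))) :=
    (Mer_tendsto_atTop.comp tendsto_neg_atBot_atTop).neg
  exact h.congr fun y => by rw [Mer_neg, neg_neg]

noncomputable def B1 (a sl : ℝ) : ℝ :=
  Real.exp (-a*sl) * (sl^2 + 6*sl/a + 6/a^2) / Real.sqrt Real.pi

noncomputable def B2 (a sl : ℝ) : ℝ :=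
  (6*sl/a - sl^2 - 6/a^2) / (Real.sqrt Real.pi * Real.exp (-a*sl))

noncomputable def Fga (a sl b1 b2 : ℝ) (x : ℝ) : ℝ :=
  b1 * Mer (sl * Real.sqrt x - a/2 * (Real.sqrt x)⁻¹)
  + b2 * Mer (sl * Real.sqrt x + a/2 * (Real.sqrt x)⁻¹)
  + (6/(a*Real.sqrt Real.pi) * (Real.sqrt x)⁻¹ + a/(2*Real.sqrt Real.pi) * (Real.sqrt x * x)⁻¹)
      * Real.exp (-sl^2 * x - a^2 * (4*x)⁻¹)

lemma Fga_deriv (a sl : ℝ) (ha : 0 < a) (hsl : 0 < sl) (x : ℝ) (hx : 0 < x) :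
    HasDerivAt (Fga a sl (B1 a sl) (B2 a sl))
      (Real.exp (-sl^2 * x) *
        (1 / (8 * Real.sqrt Real.pi) * x ^ (-(7:ℝ)/2) * Real.exp (-a^2/(4*x)) *
          (a^3 + 6*a*x))) x := by
  obtain ⟨s, hs0, rfl⟩ : ∃ s, 0 < s ∧ s^2 = x :=
    ⟨Real.sqrt x, Real.sqrt_pos.2 hx, Real.sq_sqrt hx.le⟩
  have hss : Real.sqrt (s^2) = s := Real.sqrt_sq hs0.le
  have hsne : s ≠ 0 := hs0.ne'
  have hπ : (0:ℝ) < Real.sqrt Real.pi := Real.sqrt_pos.2 Real.pi_pos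
  have hsqrt : HasDerivAt Real.sqrt (1/(2*s)) (s^2) := by
    have := Real.hasDerivAt_sqrt (x := s^2) (by positivity)
    rwa [hss] at this
  have hsqrtne : Real.sqrt (s^2) ≠ 0 := by rw [hss]; exact hsne
  have hinv : HasDerivAt (fun y => (Real.sqrt y)⁻¹) (-(1/(2*s)) / s^2) (s^2) := by
    have := hsqrt.inv hsqrtne
    rwa [hss] at this
  have hum : HasDerivAt (fun y => sl * Real.sqrt y - a/2 * (Real.sqrt y)⁻¹)
      (sl * (1/(2*s)) - a/2 * (-(1/(2*s)) / s^2)) (s^2) :=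
    (hsqrt.const_mul sl).sub (hinv.const_mul (a/2))
  have hup : HasDerivAt (fun y => sl * Real.sqrt y + a/2 * (Real.sqrt y)⁻¹)
      (sl * (1/(2*s)) + a/2 * (-(1/(2*s)) / s^2)) (s^2) :=
    (hsqrt.const_mul sl).add (hinv.const_mul (a/2))
  have hMm := (Mer_hasDerivAt _).comp (s^2) hum
  have hMp := (Mer_hasDerivAt _).comp (s^2) hup
  have h4ne : (4:ℝ) * s^2 ≠ 0 := by positivity
  have hlin : HasDerivAt (fun y : ℝ => -sl^2 * y - a^2 * (4*y)⁻¹)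
      (-sl^2 * 1 - a^2 * (-(4*1) / (4*s^2)^2)) (s^2) :=
    ((hasDerivAt_id _).const_mul (-sl^2)).sub
      ((((hasDerivAt_id (s^2)).const_mul (4:ℝ)).inv h4ne).const_mul (a^2))
  have hexp := hlin.exp
  have hmul : HasDerivAt (fun y => Real.sqrt y * y) (1/(2*s) * s^2 + Real.sqrt (s^2) * 1) (s^2) :=
    hsqrt.mul (hasDerivAt_id _)
  have hmulne : Real.sqrt (s^2) * s^2 ≠ 0 := by rw [hss]; positivity
  have hinv2 := hmul.inv hmulne
  have hFd := ((hMm.const_mul (B1 a sl)).add (hMp.const_mul (B2 a sl))).add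
    ((((hinv.const_mul (6/(a*Real.sqrt Real.pi))).add
       (hinv2.const_mul (a/(2*Real.sqrt Real.pi)))).mul hexp))
  have hpow : (s^2 : ℝ) ^ (-(7:ℝ)/2) = (s^7)⁻¹ := by
    rw [← Real.rpow_natCast s 2, ← Real.rpow_natCast s 7, ← Real.rpow_mul hs0.le,
      ← Real.rpow_neg hs0.le]
    norm_num
  have hX : Real.exp (-(sl * s - a / 2 * s⁻¹) ^ 2)
      = Real.exp (-sl^2 * s^2 - a^2 * (4*s^2)⁻¹) / Real.exp (-a*sl) := by
    rw [eq_div_iff (Real.exp_ne_zero _), ← Real.exp_add]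
    congr 1
    field_simp
    ring
  have hY : Real.exp (-(sl * s + a / 2 * s⁻¹) ^ 2)
      = Real.exp (-sl^2 * s^2 - a^2 * (4*s^2)⁻¹) * Real.exp (-a*sl) := by
    rw [← Real.exp_add]
    congr 1
    field_simp
    ring
  have hW : Real.exp (-sl^2 * s^2 - a^2 * (4*s^2)⁻¹)
      = Real.exp (-sl^2 * s^2) * Real.exp (-a^2 / (4*s^2)) := by
    rw [← Real.exp_add]
    congr 1
    field_simp
    ring
  have heq : (Real.exp (-sl ^ 2 * s ^ 2) *
      (1 / (8 * Real.sqrt Real.pi) * (s ^ 2:ℝ) ^ (-(7:ℝ) / 2) * Real.exp (-a ^ 2 / (4 * s ^ 2)) *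
        (a ^ 3 + 6 * a * s ^ 2)))
      = (B1 a sl *
          (Real.exp (-(sl * Real.sqrt (s ^ 2) - a / 2 * (Real.sqrt (s ^ 2))⁻¹) ^ 2) *
            (sl * (1 / (2 * s)) - a / 2 * (-(1 / (2 * s)) / s ^ 2))) +
        B2 a sl *
          (Real.exp (-(sl * Real.sqrt (s ^ 2) + a / 2 * (Real.sqrt (s ^ 2))⁻¹) ^ 2) *
            (sl * (1 / (2 * s)) + a / 2 * (-(1 / (2 * s)) / s ^ 2))) +
      ((6 / (a * Real.sqrt Real.pi) * (-(1 / (2 * s)) / s ^ 2) +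
            a / (2 * Real.sqrt Real.pi) *
              (-(1 / (2 * s) * s ^ 2 + Real.sqrt (s ^ 2) * 1) / (Real.sqrt (s ^ 2) * s ^ 2) ^ 2)) *
          Real.exp (-sl ^ 2 * s ^ 2 - a ^ 2 * (4 * s ^ 2)⁻¹) +
        (6 / (a * Real.sqrt Real.pi) * (Real.sqrt (s ^ 2))⁻¹ +
            a / (2 * Real.sqrt Real.pi) * (Real.sqrt (s ^ 2) * s ^ 2)⁻¹) *
          (Real.exp (-sl ^ 2 * s ^ 2 - a ^ 2 * (4 * s ^ 2)⁻¹) *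
            (-sl ^ 2 * 1 - a ^ 2 * (-(4 * 1) / (4 * s ^ 2) ^ 2))))) := by
    simp only [hss, hpow, hX, hY, hW, B1, B2]
    field_simp
    ring
  rw [heq]
  exact hFd

lemma sqrt_atTop' : Tendsto Real.sqrt atTop atTop := by
  apply tendsto_atTop_atTop_of_monotone (fun x y h => Real.sqrt_le_sqrt h)
  intro b
  exact ⟨(max b 0)^2, by rw [Real.sqrt_sq (le_max_right _ _)]; exact le_max_left _ _⟩

lemma aux_poly_exp (c1 c2 b sl : ℝ) (hb : 0 < b) :
    Tendsto (fun t:ℝ => (c1 * Real.sqrt t + c2 * (t * Real.sqrt t)) * Real.exp (-b * t)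
      * Real.exp (-sl^2 * t⁻¹)) atTop (𝓝 0) := by
  have hA := tendsto_rpow_mul_exp_neg_mul_atTop_nhds_zero (1/2) b hb
  have hB := tendsto_rpow_mul_exp_neg_mul_atTop_nhds_zero (3/2) b hb
  have hsum := (hA.const_mul c1).add (hB.const_mul c2)
  have h3 : Tendsto (fun t:ℝ => Real.exp (-sl^2 * t⁻¹)) atTop (𝓝 1) := by
    have h0 : Tendsto (fun t:ℝ => -sl^2 * t⁻¹) atTop (𝓝 0) := by
      simpa using tendsto_inv_atTop_zero.const_mul (-sl^2)
    have := (Real.continuous_exp.continuousAt (x := (0:ℝ))).tendsto.comp h0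
    simpa [Function.comp_def] using this
  have H := hsum.mul h3
  rw [show (c1*(0:ℝ) + c2*0)*1 = 0 by ring] at H
  refine H.congr' ?_
  filter_upwards [eventually_gt_atTop (0:ℝ)] with t ht
  have hs : Real.sqrt t = t ^ ((1:ℝ)/2) := Real.sqrt_eq_rpow t
  have h32 : t ^ ((3:ℝ)/2) = t * t ^ ((1:ℝ)/2) := by
    rw [show (3:ℝ)/2 = 1 + 1/2 by norm_num, Real.rpow_add ht, Real.rpow_one]
  rw [hs, h32]; ring

lemma Fga_tendsto_zero (a sl b1 b2 : ℝ) (ha : 0 < a) (hsl : 0 < sl) :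
    Tendsto (Fga a sl b1 b2) (𝓝[>] (0:ℝ))
      (𝓝 ((b2 - b1) * (Real.sqrt Real.pi/2))) := by
  have hs0' : Tendsto Real.sqrt (𝓝[>](0:ℝ)) (𝓝 0) := by
    have := Real.continuous_sqrt.tendsto 0
    rw [Real.sqrt_zero] at this
    exact this.mono_left nhdsWithin_le_nhds
  have hsIoi : Tendsto Real.sqrt (𝓝[>](0:ℝ)) (𝓝[>] (0:ℝ)) :=
    tendsto_nhdsWithin_iff.2 ⟨hs0',
      eventually_mem_nhdsWithin.mono fun x hx => Real.sqrt_pos.2 hx⟩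
  have hinvtop : Tendsto (fun x => (Real.sqrt x)⁻¹) (𝓝[>](0:ℝ)) atTop :=
    tendsto_inv_nhdsGT_zero.comp hsIoi
  have h1 : Tendsto (fun x => sl * Real.sqrt x) (𝓝[>](0:ℝ)) (𝓝 0) := by
    simpa using hs0'.const_mul sl
  have hum : Tendsto (fun x => sl * Real.sqrt x - a/2 * (Real.sqrt x)⁻¹) (𝓝[>](0:ℝ)) atBot := by
    simp only [sub_eq_add_neg]
    exact h1.add_atBot (tendsto_neg_atTop_atBot.comp (hinvtop.const_mul_atTop (by positivity)))
  have hup : Tendsto (fun x => sl * Real.sqrt x + a/2 * (Real.sqrt x)⁻¹) (𝓝[>](0:ℝ)) atTop :=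
    h1.add_atTop (hinvtop.const_mul_atTop (by positivity))
  have hMm := Mer_tendsto_atBot.comp hum
  have hMp := Mer_tendsto_atTop.comp hup
  have h3 : Tendsto (fun x => (6/(a*Real.sqrt Real.pi) * (Real.sqrt x)⁻¹
      + a/(2*Real.sqrt Real.pi) * (Real.sqrt x * x)⁻¹)
      * Real.exp (-sl^2 * x - a^2 * (4*x)⁻¹)) (𝓝[>](0:ℝ)) (𝓝 0) := by
    have H := (aux_poly_exp (6/(a*Real.sqrt Real.pi)) (a/(2*Real.sqrt Real.pi)) (a^2/4) sl
      (by positivity)).comp tendsto_inv_nhdsGT_zero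
    refine H.congr' ?_
    filter_upwards [eventually_mem_nhdsWithin] with x hx
    have hx0 : (0:ℝ) < x := hx
    simp only [Function.comp_apply]
    rw [Real.sqrt_inv, inv_inv, mul_assoc, ← Real.exp_add]
    congr 1
    · rw [mul_inv]; ring
    · congr 1; ring
  have H := ((hMm.const_mul b1).add (hMp.const_mul b2)).add h3
  have : Tendsto (Fga a sl b1 b2) (𝓝[>](0:ℝ))
      (𝓝 (b1 * -(Real.sqrt Real.pi / 2) + b2 * (Real.sqrt Real.pi / 2) + 0)) := H
  convert this using 2
  ring

lemma Fga_tendsto_atTop (a sl b1 b2 : ℝ) (ha : 0 < a) (hsl : 0 < sl) :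
    Tendsto (Fga a sl b1 b2) atTop (𝓝 ((b1 + b2) * (Real.sqrt Real.pi/2))) := by
  have hst : Tendsto Real.sqrt atTop atTop := sqrt_atTop'
  have hinv0 : Tendsto (fun x => (Real.sqrt x)⁻¹) atTop (𝓝 (0:ℝ)) :=
    tendsto_inv_atTop_zero.comp hst
  have h10 : Tendsto (fun x => a/2 * (Real.sqrt x)⁻¹) atTop (𝓝 (0:ℝ)) := by
    simpa using hinv0.const_mul (a/2)
  have hum : Tendsto (fun x => sl * Real.sqrt x - a/2 * (Real.sqrt x)⁻¹) atTop atTop := by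
    simp only [sub_eq_add_neg]
    exact (hst.const_mul_atTop hsl).atTop_add h10.neg
  have hup : Tendsto (fun x => sl * Real.sqrt x + a/2 * (Real.sqrt x)⁻¹) atTop atTop :=
    (hst.const_mul_atTop hsl).atTop_add h10
  have hMm := Mer_tendsto_atTop.comp hum
  have hMp := Mer_tendsto_atTop.comp hup
  have hmulinv : Tendsto (fun x => (Real.sqrt x * x)⁻¹) atTop (𝓝 (0:ℝ)) :=
    tendsto_inv_atTop_zero.comp (hst.atTop_mul_atTop₀ tendsto_id)
  have hexp0 : Tendsto (fun x:ℝ => Real.exp (-sl^2 * x - a^2 * (4*x)⁻¹)) atTop (𝓝 0) := by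
    apply Real.tendsto_exp_atBot.comp
    simp only [sub_eq_add_neg]
    have hx4 : Tendsto (fun x:ℝ => a^2 * (4*x)⁻¹) atTop (𝓝 (0:ℝ)) := by
      have h4 : Tendsto (fun x:ℝ => 4*x) atTop atTop :=
        tendsto_id.const_mul_atTop (by norm_num)
      have := (tendsto_inv_atTop_zero.comp h4).const_mul (a^2)
      simpa using this
    have hbot : Tendsto (fun x:ℝ => -sl^2 * x) atTop atBot :=
      tendsto_id.const_mul_atTop_of_neg (neg_lt_zero.mpr (by positivity))
    exact hbot.atBot_add hx4.neg
  have h3 := ((hinv0.const_mul (6/(a*Real.sqrt Real.pi))).add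
    (hmulinv.const_mul (a/(2*Real.sqrt Real.pi)))).mul hexp0
  have h3' : Tendsto (fun x => (6/(a*Real.sqrt Real.pi) * (Real.sqrt x)⁻¹
      + a/(2*Real.sqrt Real.pi) * (Real.sqrt x * x)⁻¹)
      * Real.exp (-sl^2 * x - a^2 * (4*x)⁻¹)) atTop (𝓝 0) := by simpa using h3
  have H := ((hMm.const_mul b1).add (hMp.const_mul b2)).add h3'
  have : Tendsto (Fga a sl b1 b2) atTop
      (𝓝 (b1 * (Real.sqrt Real.pi / 2) + b2 * (Real.sqrt Real.pi / 2) + 0)) := H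
  convert this using 2
  ring

theorem laplace_abs_ga_bound (a l : ℝ) (ha : 0 < a) (hl : 0 < l) :
    (∫ x in Set.Ioi (0 : ℝ),
      Real.exp (-l * x) *
        (1 / (8 * Real.sqrt Real.pi) * x ^ (-(7 : ℝ) / 2) * Real.exp (-a ^ 2 / (4 * x)) *
          (a ^ 3 + 6 * a * x))
      = l * Real.exp (-a * Real.sqrt l) + (6 / a) * Real.sqrt l * Real.exp (-a * Real.sqrt l)
          + (6 / a ^ 2) * Real.exp (-a * Real.sqrt l)) ∧
    MeasureTheory.IntegrableOn
      (fun x : ℝ => Real.exp (-l * x) *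
        |1 / (8 * Real.sqrt Real.pi) * x ^ (-(7 : ℝ) / 2) * Real.exp (-a ^ 2 / (4 * x)) *
          (a ^ 3 - 6 * a * x)|) (Set.Ioi (0 : ℝ)) ∧
    (∫ x in Set.Ioi (0 : ℝ),
      Real.exp (-l * x) *
        |1 / (8 * Real.sqrt Real.pi) * x ^ (-(7 : ℝ) / 2) * Real.exp (-a ^ 2 / (4 * x)) *
          (a ^ 3 - 6 * a * x)|
      ≤ l * Real.exp (-a * Real.sqrt l) + (6 / a) * Real.sqrt l * Real.exp (-a * Real.sqrt l)
          + (6 / a ^ 2) * Real.exp (-a * Real.sqrt l)) := by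
  obtain ⟨sl, hsl0, rfl⟩ : ∃ sl, 0 < sl ∧ sl^2 = l :=
    ⟨Real.sqrt l, Real.sqrt_pos.2 hl, Real.sq_sqrt hl.le⟩
  rw [Real.sqrt_sq hsl0.le]
  have hπ : (0:ℝ) < Real.sqrt Real.pi := Real.sqrt_pos.2 Real.pi_pos
  set b1 := B1 a sl with hb1
  set b2 := B2 a sl with hb2
  set L0 := (b2 - b1) * (Real.sqrt Real.pi/2) with hL0
  set Ft : ℝ → ℝ := fun y => if y ≤ 0 then L0 else Fga a sl b1 b2 y with hFtdef
  set f' : ℝ → ℝ := fun x => Real.exp (-sl^2 * x) *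
      (1 / (8 * Real.sqrt Real.pi) * x ^ (-(7:ℝ)/2) * Real.exp (-a^2/(4*x)) *
        (a^3 + 6*a*x)) with hf'
  set g : ℝ → ℝ := fun x => Real.exp (-sl^2 * x) *
      |1 / (8 * Real.sqrt Real.pi) * x ^ (-(7:ℝ)/2) * Real.exp (-a^2/(4*x)) *
        (a^3 - 6*a*x)| with hg
  have hF0 : Ft 0 = L0 := if_pos le_rfl
  have hcont : ContinuousWithinAt Ft (Ici (0:ℝ)) 0 := by
    have h0 : Tendsto Ft (𝓝[>](0:ℝ)) (𝓝 L0) := by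
      refine (Fga_tendsto_zero a sl b1 b2 ha hsl0).congr' ?_
      filter_upwards [eventually_mem_nhdsWithin] with y hy
      exact (if_neg (not_le.2 hy)).symm
    have h1 : Tendsto Ft (𝓝[Ici (0:ℝ)] 0) (𝓝 L0) := by
      rw [← Set.Ioi_union_left, nhdsWithin_union, tendsto_sup]
      refine ⟨h0, ?_⟩
      rw [nhdsWithin_singleton]
      have := tendsto_pure_nhds Ft 0
      rwa [hF0] at this
    show Tendsto Ft (𝓝[Ici (0:ℝ)] 0) (𝓝 (Ft 0))
    rw [hF0]; exact h1
  have hderiv : ∀ x ∈ Ioi (0:ℝ), HasDerivAt Ft (f' x) x := by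
    intro x hx
    refine (Fga_deriv a sl ha hsl0 x hx).congr_of_eventuallyEq ?_
    filter_upwards [Ioi_mem_nhds hx] with y hy
    exact if_neg (not_le.2 hy)
  have htop : Tendsto Ft atTop (𝓝 ((b1 + b2) * (Real.sqrt Real.pi/2))) := by
    refine (Fga_tendsto_atTop a sl b1 b2 ha hsl0).congr' ?_
    filter_upwards [eventually_gt_atTop (0:ℝ)] with y hy
    exact (if_neg (not_le.2 hy)).symm
  have hnn : ∀ x ∈ Ioi (0:ℝ), 0 ≤ f' x := by
    intro x hx
    have hx0 : (0:ℝ) < x := hx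
    have h1 : (0:ℝ) ≤ x ^ (-(7:ℝ)/2) := Real.rpow_nonneg hx0.le _
    apply mul_nonneg (Real.exp_pos _).le
    apply mul_nonneg (mul_nonneg (mul_nonneg (by positivity) h1) (Real.exp_pos _).le)
    positivity
  have hint : IntegrableOn f' (Ioi (0:ℝ)) :=
    integrableOn_Ioi_deriv_of_nonneg hcont hderiv hnn htop
  have hval : ∫ x in Ioi (0:ℝ), f' x = (b1 + b2) * (Real.sqrt Real.pi/2) - Ft 0 :=
    integral_Ioi_of_hasDerivAt_of_tendsto hcont hderiv hint htop
  rw [hF0, hL0] at hval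
  have hval' : ∫ x in Ioi (0:ℝ), f' x
      = sl^2 * Real.exp (-a*sl) + 6/a * sl * Real.exp (-a*sl) + 6/a^2 * Real.exp (-a*sl) := by
    rw [hval, hb1, hb2]
    simp only [B1, B2]
    field_simp
    ring
  have hA : ∀ x : ℝ, 0 < x →
      0 ≤ 1 / (8 * Real.sqrt Real.pi) * x ^ (-(7:ℝ)/2) * Real.exp (-a^2/(4*x)) := by
    intro x hx
    exact mul_nonneg (mul_nonneg (by positivity) (Real.rpow_nonneg hx.le _)) (Real.exp_pos _).le
  have hbound : ∀ x ∈ Ioi (0:ℝ), g x ≤ f' x := by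
    intro x hx
    have hx0 : (0:ℝ) < x := hx
    have habs : |a^3 - 6*a*x| ≤ a^3 + 6*a*x := by
      rw [abs_le]
      constructor <;> nlinarith [mul_pos ha hx0]
    calc g x = Real.exp (-sl^2 * x) *
        ((1 / (8 * Real.sqrt Real.pi) * x ^ (-(7:ℝ)/2) * Real.exp (-a^2/(4*x))) *
          |a^3 - 6*a*x|) := by
          rw [hg]; dsimp only; rw [abs_mul, abs_of_nonneg (hA x hx0)]
      _ ≤ f' x := by
          rw [hf']; dsimp only
          exact mul_le_mul_of_nonneg_left
            (mul_le_mul_of_nonneg_left habs (hA x hx0)) (Real.exp_pos _).le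
  have hgmeas : AEStronglyMeasurable g (volume.restrict (Ioi (0:ℝ))) := by
    apply ContinuousOn.aestronglyMeasurable _ measurableSet_Ioi
    apply ContinuousOn.mul
    · exact (Real.continuous_exp.comp (continuous_const.mul continuous_id)).continuousOn
    · apply ContinuousOn.abs
      apply ContinuousOn.mul
      apply ContinuousOn.mul
      apply ContinuousOn.mul
      · exact continuousOn_const
      · exact continuousOn_id.rpow_const fun x hx => Or.inl (ne_of_gt hx)
      · exact Real.continuous_exp.comp_continuousOn
          (ContinuousOn.div continuousOn_const
            ((continuous_const.mul continuous_id).continuousOn)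
            (fun x hx => by have hx0 : (0:ℝ) < x := hx; positivity))
      · exact (continuous_const.sub (continuous_const.mul continuous_id)).continuousOn
  have hgint : IntegrableOn g (Ioi (0:ℝ)) := by
    apply Integrable.mono hint hgmeas
    rw [ae_restrict_iff' measurableSet_Ioi]
    refine ae_of_all _ fun x hx => ?_
    have h1 : 0 ≤ g x := mul_nonneg (Real.exp_pos _).le (abs_nonneg _)
    rw [Real.norm_eq_abs, Real.norm_eq_abs, abs_of_nonneg h1, abs_of_nonneg (hnn x hx)]
    exact hbound x hx
  refine ⟨hval', hgint, ?_⟩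
  calc (∫ x in Ioi (0:ℝ), g x) ≤ ∫ x in Ioi (0:ℝ), f' x :=
        setIntegral_mono_on hgint hint measurableSet_Ioi hbound
    _ = _ := hval'
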